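/- arXiv:1506.04666 — 3 statements merged into one kernel-verified Lean document; each statement's English description precedes it below -/
import Mathlib

section
/- Let l,d,m,m7>0 with l=√2 d, let r1,...,r6 be the vertices of the regular octahedron r1=(l,0,-d), r2=(-l/2,√3 l/2,-d), r3=(-l/2,-√3 l/2,-d), r4=(-l,0,d), r5=(l/2,-√3 l/2,d), r6=(l/2,√3 l/2,d), r7=(0,0,0), with masses m1=...=m6=m at r1,...,r6 and m7 at r7. Then for every choice of indices 1 ≤ i < j ≤ 7 and h ∉ {i,j}, the Laura–Andoyer–Dziobek function f_{ijh} = Σ_{k∉{i,j,h}} m_k (R_{ik} - R_{jk}) Δ_{ijhk} vanishes, where R_{ik}=dist(r_i,r_k)^{-3} and Δ_{ijhk} = ((r_i-r_j) × (r_j-r_h)) ⬝ (r_h-r_k). -/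
open Real Matrix Finset

/-- Six times the signed volume of the tetrahedron on the points `a b c e`. -/
noncomputable def Δ (a b c e : EuclideanSpace ℝ (Fin 3)) : ℝ :=
  dotProduct (crossProduct (a - b) (b - c)) (c - e)

/-- The Laura–Andoyer–Dziobek function `f_{ijh}` for positions `r` and masses `m`. -/
noncomputable def dziobek (r : Fin 7 → EuclideanSpace ℝ (Fin 3)) (m : Fin 7 → ℝ)
    (i j h : Fin 7) : ℝ :=
  ∑ k ∈ Finset.univ \ {i, j, h},
    m k * ((dist (r i) (r k) ^ 3)⁻¹ - (dist (r j) (r k) ^ 3)⁻¹) * Δ (r i) (r j) (r h) (r k)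

/-- The two-rotated-triangles configuration with central seventh body. -/
noncomputable def config (l d : ℝ) : Fin 7 → EuclideanSpace ℝ (Fin 3) :=
  ![!₂[l, 0, -d], !₂[-l/2, √3*l/2, -d], !₂[-l/2, -(√3*l/2), -d],
    !₂[-l, 0, d], !₂[l/2, -(√3*l/2), d], !₂[l/2, √3*l/2, d], !₂[0, 0, 0]]

lemma sum_sdiff_ite (s : Finset (Fin 7)) (f : Fin 7 → ℝ) :
    ∑ k ∈ Finset.univ \ s, f k = ∑ k, if k ∈ s then 0 else f k := by
  rw [Finset.sdiff_eq_filter, Finset.sum_filter]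
  exact Finset.sum_congr rfl (by intro x _; by_cases hx : x ∈ s <;> simp [hx])

section
variable (l d m m7 : ℝ)
lemma config_app0 : config l d 0 = !₂[l, 0, -d] := rfl
lemma config_app1 : config l d 1 = !₂[-l/2, √3*l/2, -d] := rfl
lemma config_app2 : config l d 2 = !₂[-l/2, -(√3*l/2), -d] := rfl
lemma config_app3 : config l d 3 = !₂[-l, 0, d] := rfl
lemma config_app4 : config l d 4 = !₂[l/2, -(√3*l/2), d] := rfl
lemma config_app5 : config l d 5 = !₂[l/2, √3*l/2, d] := rfl
lemma config_app6 : config l d 6 = !₂[0, 0, 0] := rfl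
lemma mass_app0 : (![m,m,m,m,m,m,m7] : Fin 7 → ℝ) 0 = m := rfl
lemma mass_app1 : (![m,m,m,m,m,m,m7] : Fin 7 → ℝ) 1 = m := rfl
lemma mass_app2 : (![m,m,m,m,m,m,m7] : Fin 7 → ℝ) 2 = m := rfl
lemma mass_app3 : (![m,m,m,m,m,m,m7] : Fin 7 → ℝ) 3 = m := rfl
lemma mass_app4 : (![m,m,m,m,m,m,m7] : Fin 7 → ℝ) 4 = m := rfl
lemma mass_app5 : (![m,m,m,m,m,m,m7] : Fin 7 → ℝ) 5 = m := rfl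
lemma mass_app6 : (![m,m,m,m,m,m,m7] : Fin 7 → ℝ) 6 = m7 := rfl
end

set_option maxHeartbeats 4000000 in
theorem octahedron_is_central (l d m m7 : ℝ) (hl : 0 < l) (hd : 0 < d)
    (hm : 0 < m) (hm7 : 0 < m7) (hld : l = √2 * d)
    (mass : Fin 7 → ℝ) (hmass : mass = ![m, m, m, m, m, m, m7]) :
    ∀ i j h : Fin 7, i < j → h ≠ i → h ≠ j →
      dziobek (config l d) mass i j h = 0 := by
  subst hmass hld
  intro i j h hij hhi hhj
  have e7 : ∀ x : Fin 7, x = 0 ∨ x = 1 ∨ x = 2 ∨ x = 3 ∨ x = 4 ∨ x = 5 ∨ x = 6 := by decide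
  rcases e7 i with rfl|rfl|rfl|rfl|rfl|rfl|rfl <;>
  rcases e7 j with rfl|rfl|rfl|rfl|rfl|rfl|rfl <;>
    first
    | exact absurd hij (by decide)
    | (rcases e7 h with rfl|rfl|rfl|rfl|rfl|rfl|rfl <;>
       first
       | exact absurd hhi (by decide)
       | exact absurd hhj (by decide)
       | (rw [dziobek, sum_sdiff_ite, Fin.sum_univ_seven]
          simp only [Finset.mem_insert, Finset.mem_singleton, Fin.reduceEq, or_self,
            or_false, false_or, or_true, true_or, if_false, if_true]
          try norm_num [config_app0, config_app1, config_app2, config_app3, config_app4,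
            config_app5, config_app6, mass_app0, mass_app1, mass_app2, mass_app3,
            mass_app4, mass_app5, mass_app6]
          try simp only [Δ, EuclideanSpace.dist_eq, Fin.sum_univ_three, Real.dist_eq, sq_abs,
            crossProduct, dotProduct, Matrix.cons_val_zero, Matrix.cons_val_one,
            Matrix.head_cons, Matrix.cons_val_two, Matrix.tail_cons,
            PiLp.sub_apply, Matrix.cons_sub_cons, Matrix.sub_cons,
            LinearMap.mk₂_apply, Matrix.cons_dotProduct, Matrix.dotProduct_of_isEmpty,
              WithLp.ofLp_sub, WithLp.ofLp_toLp, PiLp.toLp_apply]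
          try ring_nf
          try simp only [Real.sq_sqrt (by norm_num : (2:ℝ) ≥ 0),
            Real.sq_sqrt (by norm_num : (3:ℝ) ≥ 0)]
          try ring_nf))
end

section
/- Let l,d,m,m7>0 and consider the configuration r1=(l,0,-d), r2=(-l/2,√3 l/2,-d), r3=(-l/2,-√3 l/2,-d), r4=(-l,0,d), r5=(l/2,-√3 l/2,d), r6=(l/2,√3 l/2,d), r7=(0,0,0) with masses m at r1,...,r6 and m7 at r7. If the Laura–Andoyer–Dziobek equation f_{167} = Σ_{k∈{2,3,4,5}} m (R_{1k} - R_{6k}) Δ_{167k} = 0 holds, where R_{ik}=dist(r_i,r_k)^{-3} and Δ_{ijhk} = ((r_i-r_j) × (r_j-r_h)) ⬝ (r_h-r_k), then l = √2·d. -/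
open Real Matrix Finset

lemma dist_calc (x y : EuclideanSpace ℝ (Fin 3)) :
    dist x y = √((x 0 - y 0)^2 + (x 1 - y 1)^2 + (x 2 - y 2)^2) := by
  rw [EuclideanSpace.dist_eq, Fin.sum_univ_three]
  simp [Real.dist_eq, sq_abs]

set_option maxHeartbeats 1000000 in
theorem f167_forces_octahedron (l d m m7 : ℝ) (hl : 0 < l) (hd : 0 < d)
    (hm : 0 < m) (hm7 : 0 < m7)
    (mass : Fin 7 → ℝ) (hmass : mass = ![m, m, m, m, m, m, m7])
    (hf : dziobek (config l d) mass 0 5 6 = 0) :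
    l = √2 * d := by
  have h3 : √3 ^ 2 = 3 := Real.sq_sqrt (by norm_num)
  subst hmass
  rw [dziobek, show (Finset.univ \ ({0,5,6} : Finset (Fin 7))) = {1,2,3,4} from by decide,
    Finset.sum_insert (by decide), Finset.sum_insert (by decide),
    Finset.sum_insert (by decide), Finset.sum_singleton] at hf
  have c0 : config l d 0 = !₂[l, 0, -d] := rfl
  have c1 : config l d 1 = !₂[-l/2, √3*l/2, -d] := rfl
  have c2 : config l d 2 = !₂[-l/2, -(√3*l/2), -d] := rfl
  have c3 : config l d 3 = !₂[-l, 0, d] := rfl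
  have c4 : config l d 4 = !₂[l/2, -(√3*l/2), d] := rfl
  have c5 : config l d 5 = !₂[l/2, √3*l/2, d] := rfl
  have c6 : config l d 6 = !₂[0, 0, 0] := rfl
  -- distance computations
  have d01 : dist (config l d 0) (config l d 1) = √(3*l^2) := by
    rw [dist_calc, c0, c1]; congr 1; simp only [PiLp.toLp_apply, Matrix.cons_val_zero, Matrix.cons_val_one, Matrix.head_cons, Matrix.cons_val_two, Matrix.tail_cons]; linear_combination (l^2/4) * h3
  have d51 : dist (config l d 5) (config l d 1) = √(l^2+4*d^2) := by
    rw [dist_calc, c5, c1]; congr 1; simp only [PiLp.toLp_apply, Matrix.cons_val_zero, Matrix.cons_val_one, Matrix.head_cons, Matrix.cons_val_two, Matrix.tail_cons]; ring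
  have d02 : dist (config l d 0) (config l d 2) = √(3*l^2) := by
    rw [dist_calc, c0, c2]; congr 1; simp only [PiLp.toLp_apply, Matrix.cons_val_zero, Matrix.cons_val_one, Matrix.head_cons, Matrix.cons_val_two, Matrix.tail_cons]; linear_combination (l^2/4) * h3
  have d52 : dist (config l d 5) (config l d 2) = √(4*l^2+4*d^2) := by
    rw [dist_calc, c5, c2]; congr 1; simp only [PiLp.toLp_apply, Matrix.cons_val_zero, Matrix.cons_val_one, Matrix.head_cons, Matrix.cons_val_two, Matrix.tail_cons]; linear_combination (l^2) * h3
  have d03 : dist (config l d 0) (config l d 3) = √(4*l^2+4*d^2) := by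
    rw [dist_calc, c0, c3]; congr 1; simp only [PiLp.toLp_apply, Matrix.cons_val_zero, Matrix.cons_val_one, Matrix.head_cons, Matrix.cons_val_two, Matrix.tail_cons]; ring
  have d53 : dist (config l d 5) (config l d 3) = √(3*l^2) := by
    rw [dist_calc, c5, c3]; congr 1; simp only [PiLp.toLp_apply, Matrix.cons_val_zero, Matrix.cons_val_one, Matrix.head_cons, Matrix.cons_val_two, Matrix.tail_cons]; linear_combination (l^2/4) * h3
  have d04 : dist (config l d 0) (config l d 4) = √(l^2+4*d^2) := by
    rw [dist_calc, c0, c4]; congr 1; simp only [PiLp.toLp_apply, Matrix.cons_val_zero, Matrix.cons_val_one, Matrix.head_cons, Matrix.cons_val_two, Matrix.tail_cons]; linear_combination (l^2/4) * h3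
  have d54 : dist (config l d 5) (config l d 4) = √(3*l^2) := by
    rw [dist_calc, c5, c4]; congr 1; simp only [PiLp.toLp_apply, Matrix.cons_val_zero, Matrix.cons_val_one, Matrix.head_cons, Matrix.cons_val_two, Matrix.tail_cons]; linear_combination (l^2) * h3
  rw [d01, d51, d02, d52, d03, d53, d04, d54] at hf
  have m1 : (![m,m,m,m,m,m,m7] : Fin 7 → ℝ) 1 = m := rfl
  have m2 : (![m,m,m,m,m,m,m7] : Fin 7 → ℝ) 2 = m := rfl
  have m3 : (![m,m,m,m,m,m,m7] : Fin 7 → ℝ) 3 = m := rfl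
  have m4 : (![m,m,m,m,m,m,m7] : Fin 7 → ℝ) 4 = m := rfl
  rw [m1, m2, m3, m4, c0, c1, c2, c3, c4, c5, c6] at hf
  simp only [Δ, crossProduct, dotProduct, Fin.sum_univ_three, Matrix.cons_val_zero,
    Matrix.cons_val_one, Matrix.head_cons, Matrix.cons_val_two, Matrix.tail_cons,
    PiLp.sub_apply, WithLp.ofLp_sub, WithLp.ofLp_toLp, Pi.sub_apply, LinearMap.mk₂_apply, Matrix.cons_val_fin_one] at hf
  set P := √(3*l^2) with hPdef
  set Q := √(l^2+4*d^2) with hQdef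
  have hP : 0 < P := Real.sqrt_pos.mpr (by positivity)
  have hQ : 0 < Q := Real.sqrt_pos.mpr (by positivity)
  have key : ((P^3)⁻¹ - (Q^3)⁻¹) * (m * (3 * √3 * l^2 * d)) = 0 := by
    linear_combination hf
  have hs3 : (0:ℝ) < √3 := Real.sqrt_pos.mpr (by norm_num)
  have hne : m * (3 * √3 * l^2 * d) ≠ 0 := by positivity
  have hinv : (P^3)⁻¹ = (Q^3)⁻¹ := by
    have := (mul_eq_zero.mp key).resolve_right hne
    linarith
  have hcube : P^3 = Q^3 := by
    have := congrArg Inv.inv hinv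
    simpa using this
  have hPQ : P = Q := by
    rcases lt_trichotomy P Q with h | h | h
    · exact absurd hcube (pow_lt_pow_left₀ h hP.le (by norm_num)).ne
    · exact h
    · exact absurd hcube.symm (pow_lt_pow_left₀ h hQ.le (by norm_num)).ne
  have hsq : 3*l^2 = l^2+4*d^2 := by
    have h1 : P^2 = 3*l^2 := Real.sq_sqrt (by positivity)
    have h2 : Q^2 = l^2+4*d^2 := Real.sq_sqrt (by positivity)
    rw [← h1, ← h2, hPQ]
  have hl2 : l^2 = 2*d^2 := by linarith
  calc l = √(l^2) := (Real.sqrt_sq hl.le).symm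
    _ = √(2*d^2) := by rw [hl2]
    _ = √2 * d := by rw [Real.sqrt_mul (by norm_num), Real.sqrt_sq hd.le]
end

section
/- Let l,d>0 and masses m1,...,m7>0, with the configuration r1=(l,0,-d), r2=(-l/2,√3 l/2,-d), r3=(-l/2,-√3 l/2,-d), r4=(-l,0,d), r5=(l/2,-√3 l/2,d), r6=(l/2,√3 l/2,d), r7=(0,0,0). If the Dziobek equation f_{123} = Σ_{k∈{4,5,6,7}} m_k (R_{1k} - R_{2k}) Δ_{123k} = 0 holds, where R_{ik}=dist(r_i,r_k)^{-3} and Δ_{ijhk} = ((r_i-r_j) × (r_j-r_h)) ⬝ (r_h-r_k), then m4 = m5. -/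
open Real Matrix Finset

lemma Δ_eq (a b c e : EuclideanSpace ℝ (Fin 3)) : Δ a b c e =
    ((a 1 - b 1) * (b 2 - c 2) - (a 2 - b 2) * (b 1 - c 1)) * (c 0 - e 0)
  + ((a 2 - b 2) * (b 0 - c 0) - (a 0 - b 0) * (b 2 - c 2)) * (c 1 - e 1)
  + ((a 0 - b 0) * (b 1 - c 1) - (a 1 - b 1) * (b 0 - c 0)) * (c 2 - e 2) := by
  simp [Δ, cross_apply, dotProduct, Fin.sum_univ_three]; ring

lemma dist3 (a b : EuclideanSpace ℝ (Fin 3)) :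
    dist a b = √((a 0 - b 0)^2 + (a 1 - b 1)^2 + (a 2 - b 2)^2) := by
  rw [EuclideanSpace.dist_eq, Fin.sum_univ_three]
  simp [Real.dist_eq, sq_abs]

theorem f123_forces_m4_eq_m5 (l d : ℝ) (hl : 0 < l) (hd : 0 < d)
    (mass : Fin 7 → ℝ) (hmass : ∀ i, 0 < mass i)
    (hf : dziobek (config l d) mass 0 1 2 = 0) :
    mass 3 = mass 4 := by
  have s3 : (√3)^2 = 3 := Real.sq_sqrt (by norm_num)
  have c0 : config l d 0 = ![l, 0, -d] := rfl
  have c1 : config l d 1 = ![-l/2, √3*l/2, -d] := rfl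
  have c2 : config l d 2 = ![-l/2, -(√3*l/2), -d] := rfl
  have c3 : config l d 3 = ![-l, 0, d] := rfl
  have c4 : config l d 4 = ![l/2, -(√3*l/2), d] := rfl
  have c5 : config l d 5 = ![l/2, √3*l/2, d] := rfl
  have c6 : config l d 6 = ![(0:ℝ), 0, 0] := rfl
  have hset : (Finset.univ \ {0, 1, 2} : Finset (Fin 7)) = {3,4,5,6} := by decide
  rw [dziobek, hset, Finset.sum_insert (by decide), Finset.sum_insert (by decide),
    Finset.sum_insert (by decide), Finset.sum_singleton] at hf
  have d14 : dist (config l d 0) (config l d 3) = √(4*l^2+4*d^2) := by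
    rw [dist3]; simp only [c0, c3, Matrix.cons_val_zero, Matrix.cons_val_one,
      Matrix.head_cons, Matrix.cons_val_two, Matrix.tail_cons]
    congr 1; ring
  have d24 : dist (config l d 1) (config l d 3) = √(l^2+4*d^2) := by
    rw [dist3]; simp only [c1, c3, Matrix.cons_val_zero, Matrix.cons_val_one,
      Matrix.head_cons, Matrix.cons_val_two, Matrix.tail_cons]
    congr 1; linear_combination (l^2/4) * s3
  have d15 : dist (config l d 0) (config l d 4) = √(l^2+4*d^2) := by
    rw [dist3]; simp only [c0, c4, Matrix.cons_val_zero, Matrix.cons_val_one,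
      Matrix.head_cons, Matrix.cons_val_two, Matrix.tail_cons]
    congr 1; linear_combination (l^2/4) * s3
  have d25 : dist (config l d 1) (config l d 4) = √(4*l^2+4*d^2) := by
    rw [dist3]; simp only [c1, c4, Matrix.cons_val_zero, Matrix.cons_val_one,
      Matrix.head_cons, Matrix.cons_val_two, Matrix.tail_cons]
    congr 1; linear_combination (l^2) * s3
  have d16 : dist (config l d 0) (config l d 5) = √(l^2+4*d^2) := by
    rw [dist3]; simp only [c0, c5, Matrix.cons_val_zero, Matrix.cons_val_one,
      Matrix.head_cons, Matrix.cons_val_two, Matrix.tail_cons]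
    congr 1; linear_combination (l^2/4) * s3
  have d26 : dist (config l d 1) (config l d 5) = √(l^2+4*d^2) := by
    rw [dist3]; simp only [c1, c5, Matrix.cons_val_zero, Matrix.cons_val_one,
      Matrix.head_cons, Matrix.cons_val_two, Matrix.tail_cons]
    congr 1; ring
  have d17 : dist (config l d 0) (config l d 6) = √(l^2+d^2) := by
    rw [dist3]; simp only [c0, c6, Matrix.cons_val_zero, Matrix.cons_val_one,
      Matrix.head_cons, Matrix.cons_val_two, Matrix.tail_cons]
    congr 1; ring
  have d27 : dist (config l d 1) (config l d 6) = √(l^2+d^2) := by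
    rw [dist3]; simp only [c1, c6, Matrix.cons_val_zero, Matrix.cons_val_one,
      Matrix.head_cons, Matrix.cons_val_two, Matrix.tail_cons]
    congr 1; linear_combination (l^2/4) * s3
  rw [d14, d24, d15, d25, d16, d26, d17, d27, Δ_eq, Δ_eq, Δ_eq, Δ_eq] at hf
  simp only [c0, c1, c2, c3, c4, c5, c6, Matrix.cons_val_zero, Matrix.cons_val_one,
      Matrix.head_cons, Matrix.cons_val_two, Matrix.tail_cons] at hf
  have key : (mass 3 - mass 4) * (((√(4*l^2+4*d^2))^3)⁻¹ - ((√(l^2+4*d^2))^3)⁻¹)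
      * (3*√3*l^2*d) = 0 := by linear_combination -hf
  clear hf
  have hY : (0:ℝ) < √(l^2+4*d^2) := Real.sqrt_pos.2 (by positivity)
  have hX : √(l^2+4*d^2) < √(4*l^2+4*d^2) := by
    apply Real.sqrt_lt_sqrt (by positivity); nlinarith
  have hne : ((√(4*l^2+4*d^2))^3)⁻¹ - ((√(l^2+4*d^2))^3)⁻¹ ≠ 0 := by
    have h1 : (√(l^2+4*d^2))^3 < (√(4*l^2+4*d^2))^3 := by
      apply pow_lt_pow_left₀ hX hY.le; norm_num
    have h2 : (0:ℝ) < (√(l^2+4*d^2))^3 := by positivity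
    have := one_div_lt_one_div_of_lt h2 h1
    simp only [one_div] at this
    linarith
  have h3 : (0:ℝ) < 3*√3*l^2*d := by
    have : (0:ℝ) < √3 := Real.sqrt_pos.2 (by norm_num)
    positivity
  rcases mul_eq_zero.1 key with h | h
  · rcases mul_eq_zero.1 h with h | h
    · linarith
    · exact absurd h hne
  · linarith
end
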